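/- Let p_t be the lognormal density of exponential Brownian motion, a(t) = ψ^{-1}(Kψ(t)), K ∈ (0,1), c ∈ (0,K), and define η(t,y)² = y² · (p_t(y) − c a'(t) p_{a(t)}(y))/(p_t(y) − c p_{a(t)}(y)) for y > 0. Then y² ≤ η(t,y)² ≤ y² · K/(K−c) for all t > 0, y > 0. -/

import Mathlib

open Real

/-- The lognormal density of exponential Brownian motion at time `t`. -/
noncomputable def ebmDensity (t x : ℝ) : ℝ :=
  (1 / Real.sqrt (2 * Real.pi)) * (Real.exp (-t / 8) / Real.sqrt t) *
    (Real.exp (-(Real.log x) ^ 2 / (2 * t)) / x ^ ((3 : ℝ) / 2))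

/-- The normalizing function `ψ(t) = √t e^{t/8}`. -/
noncomputable def psi (t : ℝ) : ℝ := Real.sqrt t * Real.exp (t / 8)

/-- `φ(t) = (t+4)/(8t)`, so that `a'(t) = φ(t)/φ(a(t))`. -/
noncomputable def phi (t : ℝ) : ℝ := (t + 4) / (8 * t)

lemma psi_pos {t : ℝ} (ht : 0 < t) : 0 < psi t := by
  unfold psi; positivity

lemma psi_mono {s t : ℝ} (hs : 0 ≤ s) (hst : s ≤ t) : psi s ≤ psi t := by
  unfold psi
  exact mul_le_mul (Real.sqrt_le_sqrt hst) (Real.exp_le_exp.2 (by linarith))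
    (Real.exp_pos _).le (Real.sqrt_nonneg _)

lemma phi_pos {t : ℝ} (ht : 0 < t) : 0 < phi t := by
  unfold phi; positivity

lemma phi_anti {s t : ℝ} (hs : 0 < s) (hst : s < t) : phi t < phi s := by
  unfold phi
  rw [div_lt_div_iff₀ (by linarith) (by linarith)]
  nlinarith

lemma ebm_eq {t y : ℝ} (ht : 0 < t) :
    ebmDensity t y = (1 / Real.sqrt (2 * Real.pi)) * (1 / psi t) *
      (Real.exp (-(Real.log y) ^ 2 / (2 * t)) / y ^ ((3 : ℝ) / 2)) := by
  unfold ebmDensity psi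
  have h1 : Real.exp (-t / 8) = (Real.exp (t / 8))⁻¹ := by
    rw [← Real.exp_neg]; ring_nf
  have h2 : Real.sqrt t ≠ 0 := ne_of_gt (Real.sqrt_pos.2 ht)
  rw [h1]
  field_simp

lemma ebm_pos {t y : ℝ} (ht : 0 < t) (hy : 0 < y) : 0 < ebmDensity t y := by
  unfold ebmDensity
  have := Real.sqrt_pos.2 ht
  positivity

/-- Bounds `y² ≤ η(t,y)² ≤ y² K/(K−c)` on the Dupire local volatility for the
fake exponential Brownian motion, where `a` is characterized by `ψ(a t) = K ψ(t)`
and `a'(t) = φ(t)/φ(a(t))`. -/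
theorem fakeEBM_eta_sq_bounds {c K : ℝ} (hc : 0 < c) (hcK : c < K) (hK : K < 1)
    (a : ℝ → ℝ) (ha_pos : ∀ t > 0, 0 < a t)
    (ha : ∀ t > 0, psi (a t) = K * psi t) :
    ∀ t > (0 : ℝ), ∀ y > (0 : ℝ),
      y ^ 2 ≤ y ^ 2 * ((ebmDensity t y - c * (phi t / phi (a t)) * ebmDensity (a t) y) /
            (ebmDensity t y - c * ebmDensity (a t) y)) ∧
      y ^ 2 * ((ebmDensity t y - c * (phi t / phi (a t)) * ebmDensity (a t) y) /
            (ebmDensity t y - c * ebmDensity (a t) y)) ≤ y ^ 2 * (K / (K - c)) := by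
  intro t ht y hy
  set s := a t with hs_def
  have hs : 0 < s := ha_pos t ht
  have hpsi := ha t ht
  have hst : s < t := by
    by_contra h
    push_neg at h
    have h1 : psi t ≤ psi s := psi_mono ht.le h
    have h2 : 0 < psi t := psi_pos ht
    nlinarith
  -- density comparison: K * p_s ≤ p_t
  have hKp : K * ebmDensity s y ≤ ebmDensity t y := by
    rw [ebm_eq ht, ebm_eq hs]
    have hpt : 0 < psi t := psi_pos ht
    have hps : 0 < psi s := psi_pos hs
    have hKval : K = psi s / psi t := by
      field_simp [hpsi]
      exact hpsi.symm
    have hexp : Real.exp (-(Real.log y) ^ 2 / (2 * s)) ≤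
        Real.exp (-(Real.log y) ^ 2 / (2 * t)) := by
      apply Real.exp_le_exp.2
      rw [neg_div, neg_div, neg_le_neg_iff]
      gcongr
      all_goals first | exact sq_nonneg _ | linarith
    have hyp : (0:ℝ) < y ^ ((3:ℝ)/2) := Real.rpow_pos_of_pos hy _
    have hsqpi : (0:ℝ) < Real.sqrt (2 * Real.pi) := Real.sqrt_pos.2 (by positivity)
    rw [hKval]
    calc psi s / psi t * (1 / Real.sqrt (2 * Real.pi) * (1 / psi s) *
          (Real.exp (-Real.log y ^ 2 / (2 * s)) / y ^ ((3:ℝ)/2)))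
        = 1 / Real.sqrt (2 * Real.pi) * (1 / psi t) *
          (Real.exp (-Real.log y ^ 2 / (2 * s)) / y ^ ((3:ℝ)/2)) := by
          field_simp
      _ ≤ 1 / Real.sqrt (2 * Real.pi) * (1 / psi t) *
          (Real.exp (-Real.log y ^ 2 / (2 * t)) / y ^ ((3:ℝ)/2)) := by
          gcongr
  have hpt := ebm_pos ht hy
  have hps := ebm_pos hs hy
  set r := phi t / phi s with hr_def
  have hr0 : 0 < r := div_pos (phi_pos ht) (phi_pos hs)
  have hr1 : r < 1 := by
    rw [hr_def, div_lt_one (phi_pos hs)]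
    exact phi_anti hs hst
  set pt := ebmDensity t y
  set ps := ebmDensity s y
  have hD : 0 < pt - c * ps := by nlinarith
  constructor
  · have h1 : 1 ≤ (pt - c * r * ps) / (pt - c * ps) := by
      rw [le_div_iff₀ hD]
      nlinarith [mul_nonneg (mul_nonneg hc.le (sub_nonneg.2 hr1.le)) hps.le]
    nlinarith [sq_nonneg y]
  · have h2 : (pt - c * r * ps) / (pt - c * ps) ≤ K / (K - c) := by
      rw [div_le_div_iff₀ hD (by linarith)]
      nlinarith [mul_nonneg hc.le (sub_nonneg.2 hKp),
        mul_nonneg (mul_nonneg hc.le hr0.le)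
          (mul_nonneg (by linarith : (0:ℝ) ≤ K - c) hps.le)]
    have := sq_nonneg y
    nlinarith
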